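/- arXiv:2201.05018 — 2 statements merged into one kernel-verified Lean document; each statement's English description precedes it below -/
import Mathlib

section
/- Under Model M with p = 0 or p ∈ [1/3, 1), for every t ∈ ℝ and every player j, the conditional distribution of Σ_{i ≠ j} I_i^{(n)} given the event {I_j^{(n)} = 1} is stochastically smaller than the unconditional distribution of Σ_{i ≠ j} I_i^{(n)}: for every real u, P(Σ_{i ≠ j} I_i^{(n)} > u | I_j^{(n)} = 1) ≤ P(Σ_{i ≠ j} I_i^{(n)} > u). -/
open MeasureTheory ProbabilityTheory Real Filter

noncomputable section

/-- Score of player `i` after playing everyone else: `s_i = ∑_{j ≠ i} X i j`. -/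
def score {Ω : Type*} {n : ℕ} (X : Fin n → Fin n → Ω → ℝ) (i : Fin n) (ω : Ω) : ℝ :=
  ∑ j ∈ Finset.univ.erase i, X i j ω

/-- Model M of a round-robin tournament with `n` equally strong players and
draw probability `p`. -/
structure ModelM {Ω : Type*} [MeasurableSpace Ω] (P : Measure Ω) (n : ℕ) (p : ℝ)
    (X : Fin n → Fin n → Ω → ℝ) : Prop where
  prob : IsProbabilityMeasure P
  meas : ∀ i j, Measurable (X i j)
  values : ∀ i j, i ≠ j → ∀ ω, X i j ω = 0 ∨ X i j ω = 1/2 ∨ X i j ω = 1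
  sum_one : ∀ i j, i ≠ j → ∀ ω, X i j ω + X j i ω = 1
  draw : ∀ i j, i ≠ j → P {ω | X i j ω = 1/2} = ENNReal.ofReal p
  win : ∀ i j, i ≠ j → P {ω | X i j ω = 1} = ENNReal.ofReal ((1 - p) / 2)
  indep : iIndepFun
    (fun (e : {e : Fin n × Fin n // e.1 < e.2}) (ω : Ω) =>
      (X e.val.1 e.val.2 ω, X e.val.2 e.val.1 ω)) P

/-- Normalized score `s_i* = (s_i - (n-1)/2) / sqrt((n-1)(1-p)/4)`. -/
def nScore {Ω : Type*} {n : ℕ} (p : ℝ) (X : Fin n → Fin n → Ω → ℝ) (i : Fin n) (ω : Ω) : ℝ :=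
  (score X i ω - ((n : ℝ) - 1) / 2) / Real.sqrt (((n : ℝ) - 1) * (1 - p) / 4)

/-- `a_n = (2 log n)^{-1/2}`. -/
def aN (n : ℕ) : ℝ := 1 / Real.sqrt (2 * Real.log n)

/-- `b_n = (2 log n)^{1/2} - (1/2)(2 log n)^{-1/2} (log log n + log 4π)`. -/
def bN (n : ℕ) : ℝ :=
  Real.sqrt (2 * Real.log n)
    - (1 / 2) * (1 / Real.sqrt (2 * Real.log n)) * (Real.log (Real.log n) + Real.log (4 * Real.pi))

/-- The threshold `x_n(t) = a_n t + b_n`. -/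
def xN (n : ℕ) (t : ℝ) : ℝ := aN n * t + bN n

/-- `k`-th smallest value (order statistic) of the family `f : Fin n → ℝ`, for `k = 1, …, n`. -/
def orderStat {n : ℕ} (k : ℕ) (f : Fin n → ℝ) : ℝ :=
  ((Finset.univ.val.map f).sort (· ≤ ·)).getD (k - 1) 0

/-- Total variation distance between two measures on `ℕ`. -/
def tvDist (μ ν : Measure ℕ) : ℝ := ⨆ A : Set ℕ, |(μ A).toReal - (ν A).toReal|

/-- Standard normal cumulative distribution function. -/
def stdNormalCDF (x : ℝ) : ℝ :=
  (Real.sqrt (2 * Real.pi))⁻¹ * ∫ u in Set.Iic x, Real.exp (-u ^ 2 / 2)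

end


section HarrisHelpers
open ENNReal

lemma enn_rearrange {a b c d : ℝ≥0∞} (hab : a ≤ b) (hdc : d ≤ c) :
    a * c + b * d ≤ a * d + b * c := by
  have hb : a + (b - a) = b := add_tsub_cancel_of_le hab
  calc a * c + b * d = a * c + (a + (b - a)) * d := by rw [hb]
    _ = a * d + (a * c + (b - a) * d) := by rw [add_mul]; try ring
    _ ≤ a * d + (a * c + (b - a) * c) := by gcongr
    _ = a * d + (a + (b - a)) * c := by rw [add_mul]; try ring
    _ = a * d + b * c := by rw [hb]

/-- Chebyshev correlation inequality in `ℝ≥0∞` for a monotone and an antitone function. -/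
lemma lintegral_mul_le_of_monotone_antitone (μ : Measure ℝ) [IsProbabilityMeasure μ]
    {F G : ℝ → ℝ≥0∞} (hF : Measurable F) (hG : Measurable G)
    (hFm : Monotone F) (hGa : Antitone G) :
    ∫⁻ x, F x * G x ∂μ ≤ (∫⁻ x, F x ∂μ) * ∫⁻ x, G x ∂μ := by
  have key : ∀ z : ℝ × ℝ, F z.1 * G z.1 + F z.2 * G z.2 ≤ F z.1 * G z.2 + F z.2 * G z.1 := by
    rintro ⟨x, y⟩
    rcases le_total x y with h | h
    · have := enn_rearrange (hFm h) (hGa h)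
      simpa [add_comm, mul_comm] using this
    · have := enn_rearrange (hFm h) (hGa h)
      simpa [add_comm, mul_comm] using this
  have h1 : ∫⁻ z : ℝ × ℝ, (F z.1 * G z.1 + F z.2 * G z.2) ∂(μ.prod μ)
      ≤ ∫⁻ z : ℝ × ℝ, (F z.1 * G z.2 + F z.2 * G z.1) ∂(μ.prod μ) :=
    lintegral_mono key
  have hFG : Measurable fun x => F x * G x := hF.mul hG
  have m1 : Measurable fun z : ℝ × ℝ => F z.1 * G z.1 :=
    (hF.comp measurable_fst).mul (hG.comp measurable_fst)
  have m3 : Measurable fun z : ℝ × ℝ => F z.1 * G z.2 :=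
    (hF.comp measurable_fst).mul (hG.comp measurable_snd)
  have e1 : ∫⁻ z : ℝ × ℝ, F z.1 * G z.1 ∂(μ.prod μ) = ∫⁻ x, F x * G x ∂μ := by
    have := lintegral_prod_mul (μ := μ) (ν := μ) hFG.aemeasurable
      (aemeasurable_const (b := (1:ℝ≥0∞)))
    simpa using this
  have e2 : ∫⁻ z : ℝ × ℝ, F z.2 * G z.2 ∂(μ.prod μ) = ∫⁻ x, F x * G x ∂μ := by
    have := lintegral_prod_mul (μ := μ) (ν := μ)
      (aemeasurable_const (b := (1:ℝ≥0∞))) hFG.aemeasurable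
    simpa [mul_comm] using this
  have e3 : ∫⁻ z : ℝ × ℝ, F z.1 * G z.2 ∂(μ.prod μ) = (∫⁻ x, F x ∂μ) * ∫⁻ x, G x ∂μ :=
    lintegral_prod_mul hF.aemeasurable hG.aemeasurable
  have e4 : ∫⁻ z : ℝ × ℝ, F z.2 * G z.1 ∂(μ.prod μ) = (∫⁻ x, F x ∂μ) * ∫⁻ x, G x ∂μ := by
    rw [show (fun z : ℝ × ℝ => F z.2 * G z.1) = fun z : ℝ × ℝ => G z.1 * F z.2 by
      funext z; ring]
    rw [lintegral_prod_mul hG.aemeasurable hF.aemeasurable]; ring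
  rw [lintegral_add_left m1, lintegral_add_left m3, e1, e2, e3, e4] at h1
  have h2 : 2 * ∫⁻ x, F x * G x ∂μ ≤ 2 * ((∫⁻ x, F x ∂μ) * ∫⁻ x, G x ∂μ) := by
    rw [two_mul, two_mul]; exact h1
  exact (ENNReal.mul_le_mul_iff_right (by norm_num) (by norm_num)).mp h2

/-- Precomposition of an independent family along an injective reindexing. -/
lemma iIndepFun_precomp {Ω ι κ β : Type*} [MeasurableSpace Ω] {μ : Measure Ω}
    [IsProbabilityMeasure μ] {mβ : MeasurableSpace β} {f : ι → Ω → β}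
    (g : κ → ι) (hg : Function.Injective g)
    (h : iIndepFun (m := fun _ => mβ) f μ) :
    iIndepFun (m := fun _ => mβ) (fun k => f (g k)) μ := by
  rw [iIndepFun_iff_measure_inter_preimage_eq_mul]
  intro S sets hsets
  rcases S.eq_empty_or_nonempty with rfl | hS
  · simp
  have : Nonempty κ := ⟨hS.choose⟩
  classical
  set sets' : ι → Set β := fun i => sets (Function.invFun g i) with hsets'
  have hinv : ∀ k, Function.invFun g (g k) = k := fun k =>
    Function.leftInverse_invFun hg k
  have key := h.measure_inter_preimage_eq_mul (S.image g) (sets := sets')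
    (fun i hi => by
      rcases Finset.mem_image.mp hi with ⟨k, hk, rfl⟩
      simpa [hsets', hinv] using hsets k hk)
  rw [Finset.prod_image (fun a _ b _ hab => hg hab)] at key
  have hIcap : (⋂ i ∈ S.image g, f i ⁻¹' sets' i) = ⋂ k ∈ S, f (g k) ⁻¹' sets k := by
    ext ω
    simp only [Set.mem_iInter, Finset.mem_image]
    constructor
    · intro H k hk
      have := H (g k) ⟨k, hk, rfl⟩
      simpa [hsets', hinv] using this
    · rintro H i ⟨k, hk, rfl⟩
      simpa [hsets', hinv] using H k hk
  rw [hIcap] at key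
  rw [key]
  exact Finset.prod_congr rfl fun k _ => by simp [hsets', hinv]

/-- Harris inequality for finitely many independent real random variables:
an upper event and a lower event are negatively correlated. -/
lemma harris_fin {Ω : Type*} [MeasurableSpace Ω] (P : Measure Ω) [IsProbabilityMeasure P] :
    ∀ (m : ℕ) (Y : Fin m → Ω → ℝ), (∀ i, Measurable (Y i)) →
    iIndepFun Y P →
    ∀ (A B : Set (Fin m → ℝ)), MeasurableSet A → MeasurableSet B →
    IsUpperSet A → IsLowerSet B →
    P ((fun ω i => Y i ω) ⁻¹' A ∩ (fun ω i => Y i ω) ⁻¹' B)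
      ≤ P ((fun ω i => Y i ω) ⁻¹' A) * P ((fun ω i => Y i ω) ⁻¹' B) := by
  intro m
  induction m with
  | zero =>
    intro Y hmeas hind A B hAm hBm hAu hBl
    have hset : ∀ (s : Set (Fin 0 → ℝ)), s = ∅ ∨ s = Set.univ := by
      intro s
      by_cases h : (default : Fin 0 → ℝ) ∈ s
      · right
        exact Set.eq_univ_of_forall fun x => by
          rwa [Subsingleton.elim x (default : Fin 0 → ℝ)]
      · left
        exact Set.eq_empty_iff_forall_notMem.mpr fun x hx => h (by
          rwa [Subsingleton.elim x (default : Fin 0 → ℝ)] at hx)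
    rcases hset A with rfl | rfl <;> rcases hset B with rfl | rfl <;> simp
  | succ m ih =>
    intro Y hmeas hind A B hAm hBm hAu hBl
    classical
    set Yl : Ω → ℝ := Y (Fin.last m) with hYl
    set Vr : Ω → (Fin m → ℝ) := fun ω i => Y i.castSucc ω with hVr
    have hYlm : Measurable Yl := hmeas _
    have hVrm : Measurable Vr := measurable_pi_lambda _ fun i => hmeas _
    -- independence of Yl and Vr
    have hindep : IndepFun Yl Vr P := by
      have hdisj : Disjoint ({Fin.last m} : Finset (Fin (m+1)))
          (Finset.univ.erase (Fin.last m)) :=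
        Finset.disjoint_singleton_left.mpr (Finset.notMem_erase _ _)
      have hfin := hind.indepFun_finset {Fin.last m} (Finset.univ.erase (Fin.last m))
        hdisj hmeas
      have := hfin.comp (_mγ := (inferInstance : MeasurableSpace ℝ))
        (_mγ' := (inferInstance : MeasurableSpace (Fin m → ℝ)))
        (φ := fun v : ({Fin.last m} : Finset (Fin (m+1))) → ℝ =>
          v ⟨Fin.last m, Finset.mem_singleton_self _⟩)
        (ψ := fun (v : (Finset.univ.erase (Fin.last m) : Finset (Fin (m+1))) → ℝ)
            (i : Fin m) => v ⟨i.castSucc,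
              Finset.mem_erase.mpr ⟨(Fin.castSucc_lt_last i).ne, Finset.mem_univ _⟩⟩)
        (measurable_pi_apply _)
        (measurable_pi_lambda _ fun i => measurable_pi_apply _)
      exact this
    -- snoc map
    set sn : ℝ × (Fin m → ℝ) → (Fin (m+1) → ℝ) := fun q => Fin.snoc q.2 q.1 with hsn
    have hsnm : Measurable sn := by
      refine measurable_pi_lambda _ fun i => ?_
      induction i using Fin.lastCases with
      | last => simpa [hsn, Fin.snoc_last] using measurable_fst
      | cast i => simpa [hsn, Fin.snoc_castSucc, Function.comp_def] using
          (measurable_pi_apply i).comp measurable_snd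
    have hsnmono : Monotone sn := by
      rintro ⟨x, r⟩ ⟨x', r'⟩ ⟨h1, h2⟩ i
      induction i using Fin.lastCases with
      | last => simpa [hsn, Fin.snoc_last] using h1
      | cast i => simpa [hsn, Fin.snoc_castSucc] using h2 i
    have hrecon : ∀ ω, sn (Yl ω, Vr ω) = fun i => Y i ω := by
      intro ω; funext i
      induction i using Fin.lastCases with
      | last => simp [hsn, Fin.snoc_last, hYl]
      | cast i => simp [hsn, Fin.snoc_castSucc, hVr]
    -- laws
    set μl : Measure ℝ := P.map Yl with hμl
    set μr : Measure (Fin m → ℝ) := P.map Vr with hμr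
    have : IsProbabilityMeasure μl := Measure.isProbabilityMeasure_map hYlm.aemeasurable
    have : IsProbabilityMeasure μr := Measure.isProbabilityMeasure_map hVrm.aemeasurable
    have hmap : P.map (fun ω => (Yl ω, Vr ω)) = μl.prod μr :=
      (indepFun_iff_map_prod_eq_prod_map_map hYlm.aemeasurable hVrm.aemeasurable).mp hindep
    have hpairm : Measurable fun ω => (Yl ω, Vr ω) := hYlm.prodMk hVrm
    have hPs : ∀ s : Set (Fin (m+1) → ℝ), MeasurableSet s →
        P ((fun ω i => Y i ω) ⁻¹' s) = (μl.prod μr) (sn ⁻¹' s) := by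
      intro s hs
      have hpre : (fun ω i => Y i ω) ⁻¹' s = (fun ω => (Yl ω, Vr ω)) ⁻¹' (sn ⁻¹' s) := by
        ext ω
        simp only [Set.mem_preimage, hrecon ω]
      rw [hpre, ← Measure.map_apply hpairm (hsnm hs), hmap]
    -- sections
    set As : ℝ → Set (Fin m → ℝ) := fun x => (fun r => sn (x, r)) ⁻¹' A with hAs
    set Bs : ℝ → Set (Fin m → ℝ) := fun x => (fun r => sn (x, r)) ⁻¹' B with hBs
    have hsecm : ∀ x : ℝ, Measurable fun r : Fin m → ℝ => sn (x, r) :=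
      fun x => hsnm.comp (measurable_const.prodMk measurable_id)
    set F : ℝ → ℝ≥0∞ := fun x => μr (As x) with hF
    set G : ℝ → ℝ≥0∞ := fun x => μr (Bs x) with hG
    have hFmeas : Measurable F := measurable_measure_prodMk_left (hsnm hAm)
    have hGmeas : Measurable G := measurable_measure_prodMk_left (hsnm hBm)
    have hFmono : Monotone F := by
      intro x x' hxx'
      refine measure_mono fun r hr => ?_
      exact hAu (hsnmono (Prod.mk_le_mk.mpr ⟨hxx', le_rfl⟩))
        (show sn (x, r) ∈ A from hr)
    have hGanti : Antitone G := by
      intro x x' hxx'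
      refine measure_mono fun r hr => ?_
      exact hBl (hsnmono (Prod.mk_le_mk.mpr ⟨hxx', le_rfl⟩))
        (show sn (x', r) ∈ B from hr)
    -- pointwise Harris via induction hypothesis
    have hindr : iIndepFun
        (fun i : Fin m => Y i.castSucc) P :=
      iIndepFun_precomp Fin.castSucc (Fin.castSucc_injective m) hind
    have hpoint : ∀ x : ℝ, μr (As x ∩ Bs x) ≤ F x * G x := by
      intro x
      have hAsm : MeasurableSet (As x) := (hsecm x) hAm
      have hBsm : MeasurableSet (Bs x) := (hsecm x) hBm
      have hAsu : IsUpperSet (As x) := fun r r' hrr' hr =>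
        hAu (hsnmono (Prod.mk_le_mk.mpr ⟨le_rfl, hrr'⟩)) (show sn (x, r) ∈ A from hr)
      have hBsl : IsLowerSet (Bs x) := fun r r' hrr' hr =>
        hBl (hsnmono (Prod.mk_le_mk.mpr ⟨le_rfl, hrr'⟩)) (show sn (x, r) ∈ B from hr)
      have := ih (fun i => Y i.castSucc) (fun i => hmeas _) hindr
        (As x) (Bs x) hAsm hBsm hAsu hBsl
      have hμrs : ∀ s : Set (Fin m → ℝ), MeasurableSet s → μr s = P (Vr ⁻¹' s) :=
        fun s hs => Measure.map_apply hVrm hs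
      calc μr (As x ∩ Bs x) = P (Vr ⁻¹' (As x ∩ Bs x)) := hμrs _ (hAsm.inter hBsm)
        _ ≤ P (Vr ⁻¹' As x) * P (Vr ⁻¹' Bs x) := by
            simpa [Set.preimage_inter] using this
        _ = F x * G x := by rw [← hμrs _ hAsm, ← hμrs _ hBsm]
    -- assemble
    have hprodAB : (μl.prod μr) (sn ⁻¹' (A ∩ B))
        = ∫⁻ x, μr (As x ∩ Bs x) ∂μl := by
      rw [Measure.prod_apply (hsnm (hAm.inter hBm))]
      rfl
    have hprodA : (μl.prod μr) (sn ⁻¹' A) = ∫⁻ x, F x ∂μl := by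
      rw [Measure.prod_apply (hsnm hAm)]
      rfl
    have hprodB : (μl.prod μr) (sn ⁻¹' B) = ∫⁻ x, G x ∂μl := by
      rw [Measure.prod_apply (hsnm hBm)]
      rfl
    calc P ((fun ω i => Y i ω) ⁻¹' A ∩ (fun ω i => Y i ω) ⁻¹' B)
        = (μl.prod μr) (sn ⁻¹' (A ∩ B)) := by
          rw [← Set.preimage_inter]; exact hPs _ (hAm.inter hBm)
      _ = ∫⁻ x, μr (As x ∩ Bs x) ∂μl := hprodAB
      _ ≤ ∫⁻ x, F x * G x ∂μl := lintegral_mono hpoint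
      _ ≤ (∫⁻ x, F x ∂μl) * ∫⁻ x, G x ∂μl :=
          lintegral_mul_le_of_monotone_antitone μl hFmeas hGmeas hFmono hGanti
      _ = (μl.prod μr) (sn ⁻¹' A) * (μl.prod μr) (sn ⁻¹' B) := by
          rw [hprodA, hprodB]
      _ = P ((fun ω i => Y i ω) ⁻¹' A) * P ((fun ω i => Y i ω) ⁻¹' B) := by
          rw [hPs _ hAm, hPs _ hBm]

/-- Harris inequality, version for an arbitrary finite index type. -/
lemma harris_fintype {Ω κ : Type*} [MeasurableSpace Ω] [Fintype κ] (P : Measure Ω)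
    [IsProbabilityMeasure P] (Y : κ → Ω → ℝ) (hmeas : ∀ i, Measurable (Y i))
    (hind : iIndepFun Y P)
    (A B : Set (κ → ℝ)) (hAm : MeasurableSet A) (hBm : MeasurableSet B)
    (hAu : IsUpperSet A) (hBl : IsLowerSet B) :
    P ((fun ω k => Y k ω) ⁻¹' A ∩ (fun ω k => Y k ω) ⁻¹' B)
      ≤ P ((fun ω k => Y k ω) ⁻¹' A) * P ((fun ω k => Y k ω) ⁻¹' B) := by
  classical
  set eq := Fintype.equivFin κ with heq
  set Yf : Fin (Fintype.card κ) → Ω → ℝ := fun i => Y (eq.symm i) with hYf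
  have hYfm : ∀ i, Measurable (Yf i) := fun i => hmeas _
  have hYfind : iIndepFun Yf P :=
    iIndepFun_precomp eq.symm eq.symm.injective hind
  set r : (Fin (Fintype.card κ) → ℝ) → (κ → ℝ) := fun v k => v (eq k) with hr
  have hrm : Measurable r := measurable_pi_lambda _ fun k => measurable_pi_apply _
  have hrmono : Monotone r := fun v w hvw k => hvw _
  have hvec : (fun ω k => Y k ω) = fun ω => r (fun i => Yf i ω) := by
    funext ω k
    simp [hr, hYf]
  have h := harris_fin P (Fintype.card κ) Yf hYfm hYfind (r ⁻¹' A) (r ⁻¹' B)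
    (hrm hAm) (hrm hBm) (hAu.preimage hrmono) (hBl.preimage hrmono)
  rw [hvec]
  simpa [Set.preimage_preimage] using h

end HarrisHelpers

set_option maxHeartbeats 1000000 in
/-- Conditionally on `{I_j = 1}`, the number of other exceedances is stochastically
smaller than unconditionally: for all real `u`,
`P(∑_{i≠j} I_i > u | I_j = 1) ≤ P(∑_{i≠j} I_i > u)`. -/
theorem exceedances_stochastically_smaller_given_exceedance
    {Ω : Type*} [MeasurableSpace Ω] (P : MeasureTheory.Measure Ω) (n : ℕ) (p : ℝ)
    (X : Fin n → Fin n → Ω → ℝ) (hn : 2 ≤ n) (hM : ModelM P n p X)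
    (hp : p = 0 ∨ (1/3 ≤ p ∧ p < 1)) (t : ℝ) (j : Fin n) (u : ℝ) :
    (P[|{ω | xN n t < nScore p X j ω}]
        {ω | u < ∑ i ∈ Finset.univ.erase j,
          if xN n t < nScore p X i ω then (1 : ℝ) else 0}).toReal
      ≤ (P {ω | u < ∑ i ∈ Finset.univ.erase j,
          if xN n t < nScore p X i ω then (1 : ℝ) else 0}).toReal := by
  classical
  haveI : IsProbabilityMeasure P := hM.prob
  -- basic positivity
  have hn1 : (1 : ℝ) ≤ (n : ℝ) - 1 := by
    have : (2 : ℝ) ≤ (n : ℝ) := by exact_mod_cast hn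
    linarith
  have hp1 : p < 1 := by rcases hp with rfl | ⟨_, h⟩ <;> [norm_num; exact h]
  have hσpos : 0 < Real.sqrt (((n : ℝ) - 1) * (1 - p) / 4) := by
    apply Real.sqrt_pos.mpr
    have : 0 < 1 - p := by linarith
    positivity
  set σ0 : ℝ := Real.sqrt (((n : ℝ) - 1) * (1 - p) / 4) with hσ0
  set c : ℝ := xN n t * σ0 + ((n : ℝ) - 1) / 2 with hc
  have hthresh : ∀ (i : Fin n) (ω : Ω), (xN n t < nScore p X i ω) ↔ (c < score X i ω) := by
    intro i ω
    rw [nScore, lt_div_iff₀ hσpos]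
    constructor <;> intro h <;> [skip; skip] <;> simp only [hc] at * <;> linarith
  -- players other than j
  set κ := {i : Fin n // i ≠ j} with hκ
  -- the pair index type of the model
  set pt := {e : Fin n × Fin n // e.1 < e.2} with hpt
  set W : pt → Ω → ℝ × ℝ := fun e ω => (X e.val.1 e.val.2 ω, X e.val.2 e.val.1 ω) with hW
  have hWm : ∀ e : pt, Measurable (W e) := fun e =>
    (hM.meas _ _).prodMk (hM.meas _ _)
  -- the games of player j against the others
  set Y' : κ → Ω → ℝ := fun k ω => X j k.1 ω with hY'
  have hY'm : ∀ k, Measurable (Y' k) := fun k => hM.meas _ _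
  -- independence of the games of player j
  set g : κ → pt := fun k => if h : j < k.1 then ⟨(j, k.1), h⟩
    else ⟨(k.1, j), lt_of_le_of_ne (not_lt.mp h) k.2⟩ with hg
  have hgval1 : ∀ k : κ, (h : j < k.1) → g k = ⟨(j, k.1), h⟩ := by
    intro k h; simp only [hg]; rw [dif_pos h]
  have hgval2 : ∀ k : κ, (h : ¬ j < k.1) → g k = ⟨(k.1, j), lt_of_le_of_ne (not_lt.mp h) k.2⟩ := by
    intro k h; simp only [hg]; rw [dif_neg h]
  have hginj : Function.Injective g := by
    intro k1 k2 hk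
    apply Subtype.ext
    by_cases h1 : j < k1.1 <;> by_cases h2 : j < k2.1
    · rw [hgval1 k1 h1, hgval1 k2 h2] at hk
      exact congrArg (fun e : pt => e.val.2) hk
    · rw [hgval1 k1 h1, hgval2 k2 h2] at hk
      exact absurd (congrArg (fun e : pt => e.val.1) hk).symm k2.2
    · rw [hgval2 k1 h1, hgval1 k2 h2] at hk
      exact absurd (congrArg (fun e : pt => e.val.1) hk) k1.2
    · rw [hgval2 k1 h1, hgval2 k2 h2] at hk
      exact congrArg (fun e : pt => e.val.1) hk
  have hY'ind : iIndepFun Y' P := by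
    have h1 := (iIndepFun_precomp g hginj hM.indep).comp
      (fun k : κ => if j < k.1 then (Prod.fst : ℝ × ℝ → ℝ) else Prod.snd)
      (fun k : κ => by
        by_cases h : j < k.1
        · rw [if_pos h]; exact measurable_fst
        · rw [if_neg h]; exact measurable_snd)
    have heq : (fun (k : κ) => (if j < k.1 then (Prod.fst : ℝ × ℝ → ℝ) else Prod.snd) ∘
        (fun ω => (X (g k).val.1 (g k).val.2 ω, X (g k).val.2 (g k).val.1 ω))) = Y' := by
      funext k
      by_cases h : j < k.1
      · rw [if_pos h, hgval1 k h]; rfl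
      · rw [if_neg h, hgval2 k h]; rfl
    rwa [heq] at h1
  -- the games not involving j
  set T : Finset pt := Finset.univ.filter (fun e => e.val.1 ≠ j ∧ e.val.2 ≠ j) with hT
  set S : Finset pt := Finset.univ.filter (fun e => e.val.1 = j ∨ e.val.2 = j) with hS
  have hdisj : Disjoint T S := by
    rw [Finset.disjoint_left]
    intro e heT heS
    rw [hT, Finset.mem_filter] at heT
    rw [hS, Finset.mem_filter] at heS
    tauto
  set ZT : Ω → ({x // x ∈ T} → ℝ × ℝ) := fun ω e => W e.1 ω with hZT
  set US : Ω → ({x // x ∈ S} → ℝ × ℝ) := fun ω e => W e.1 ω with hUS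
  have hZTm : Measurable ZT := measurable_pi_lambda _ fun e => hWm _
  have hUSm : Measurable US := measurable_pi_lambda _ fun e => hWm _
  have hTSindep : IndepFun ZT US P := hM.indep.indepFun_finset T S hdisj hWm
  -- reconstruction of the games not involving j
  set ξ : ({x // x ∈ T} → ℝ × ℝ) → Fin n → Fin n → ℝ := fun z a b =>
    ∑ e : {x // x ∈ T}, ((if e.1.1.1 = a ∧ e.1.1.2 = b then (z e).1 else 0)
      + (if e.1.1.1 = b ∧ e.1.1.2 = a then (z e).2 else 0)) with hξ
  have hξm : Measurable ξ := by
    refine measurable_pi_lambda _ fun a => measurable_pi_lambda _ fun b => ?_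
    refine Finset.measurable_sum _ fun e _ => Measurable.add ?_ ?_ <;>
      · split_ifs
        · first
            | exact (measurable_pi_apply e).fst
            | exact (measurable_pi_apply e).snd
        · exact measurable_const
  have hξeq : ∀ (ω : Ω) (a b : Fin n), a ≠ j → b ≠ j → a ≠ b → ξ (ZT ω) a b = X a b ω := by
    intro ω a b ha hb hab
    rcases lt_or_gt_of_ne hab with h | h
    · have hmem : (⟨(a, b), h⟩ : pt) ∈ T :=
        Finset.mem_filter.mpr ⟨Finset.mem_univ _, ⟨ha, hb⟩⟩
      have := Finset.sum_eq_single_of_mem (f := fun e : {x // x ∈ T} =>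
          ((if e.1.1.1 = a ∧ e.1.1.2 = b then (ZT ω e).1 else 0)
            + (if e.1.1.1 = b ∧ e.1.1.2 = a then (ZT ω e).2 else 0)))
          (⟨⟨(a, b), h⟩, hmem⟩ : {x // x ∈ T}) (Finset.mem_univ _) ?side
      · refine Eq.trans this ?_
        dsimp only
        rw [if_pos ⟨rfl, rfl⟩, if_neg (by rintro ⟨h1, h2⟩; exact hab h1), add_zero]
      case side =>
        intro e _ hne
        have h1 : ¬(e.1.1.1 = a ∧ e.1.1.2 = b) := by
          rintro ⟨u1, u2⟩
          exact hne (Subtype.ext (Subtype.ext (Prod.ext u1 u2)))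
        have h2 : ¬(e.1.1.1 = b ∧ e.1.1.2 = a) := by
          rintro ⟨u1, u2⟩
          have hlt := e.1.2
          rw [u1, u2] at hlt
          exact lt_asymm h hlt
        rw [if_neg h1, if_neg h2, add_zero]
    · have hmem : (⟨(b, a), h⟩ : pt) ∈ T :=
        Finset.mem_filter.mpr ⟨Finset.mem_univ _, ⟨hb, ha⟩⟩
      have := Finset.sum_eq_single_of_mem (f := fun e : {x // x ∈ T} =>
          ((if e.1.1.1 = a ∧ e.1.1.2 = b then (ZT ω e).1 else 0)
            + (if e.1.1.1 = b ∧ e.1.1.2 = a then (ZT ω e).2 else 0)))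
          (⟨⟨(b, a), h⟩, hmem⟩ : {x // x ∈ T}) (Finset.mem_univ _) ?side2
      · refine Eq.trans this ?_
        dsimp only
        rw [if_neg (by rintro ⟨h1, h2⟩; exact hab.symm h1), if_pos ⟨rfl, rfl⟩, zero_add]
      case side2 =>
        intro e _ hne
        have h1 : ¬(e.1.1.1 = a ∧ e.1.1.2 = b) := by
          rintro ⟨u1, u2⟩
          have hlt := e.1.2
          rw [u1, u2] at hlt
          exact lt_asymm h hlt
        have h2 : ¬(e.1.1.1 = b ∧ e.1.1.2 = a) := by
          rintro ⟨u1, u2⟩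
          exact hne (Subtype.ext (Subtype.ext (Prod.ext u1 u2)))
        rw [if_neg h1, if_neg h2, add_zero]
  set Z : Ω → (Fin n → Fin n → ℝ) := fun ω => ξ (ZT ω) with hZ
  have hZm : Measurable Z := hξm.comp hZTm
  set Yv : Ω → (κ → ℝ) := fun ω k => Y' k ω with hYv
  have hYvm : Measurable Yv := measurable_pi_lambda _ fun k => hY'm k
  -- Z is independent of Yv
  set φ : ({x // x ∈ S} → ℝ × ℝ) → (κ → ℝ) := fun v k =>
    if h : j < k.1 then (v ⟨⟨(j, k.1), h⟩,
        Finset.mem_filter.mpr ⟨Finset.mem_univ _, Or.inl rfl⟩⟩).1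
      else (v ⟨⟨(k.1, j), lt_of_le_of_ne (not_lt.mp h) k.2⟩,
        Finset.mem_filter.mpr ⟨Finset.mem_univ _, Or.inr rfl⟩⟩).2 with hφ
  have hφm : Measurable φ := by
    refine measurable_pi_lambda _ fun k => ?_
    simp only [hφ]
    by_cases h : j < k.1
    · simp only [dif_pos h]
      exact (measurable_pi_apply _).fst
    · simp only [dif_neg h]
      exact (measurable_pi_apply _).snd
  have hYUS : (φ ∘ US) = Yv := by
    funext ω
    funext k
    by_cases h : j < k.1
    · simp only [Function.comp_apply, hφ, dif_pos h]; rfl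
    · simp only [Function.comp_apply, hφ, dif_neg h]; rfl
  have hindZY : IndepFun Z Yv P := by
    have h1 := hTSindep.comp hξm hφm
    have h2 : (ξ ∘ ZT) = Z := rfl
    rwa [h2, hYUS] at h1
  -- remaining-score function
  set R : (Fin n → Fin n → ℝ) → κ → ℝ :=
    fun M k => ∑ l ∈ (Finset.univ.erase (k : Fin n)).erase j, M k.1 l with hR
  have hRm : ∀ k : κ, Measurable fun M => R M k := fun k =>
    Finset.measurable_sum _ fun l _ =>
      (measurable_pi_apply l).comp (measurable_pi_apply (k : Fin n))
  -- the two events, as sets in the product coordinates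
  set A' : Set (κ → ℝ) := {y | c < ∑ k : κ, y k} with hA'
  have hA'meas : MeasurableSet A' :=
    measurableSet_lt measurable_const (Finset.measurable_sum _ fun k _ => measurable_pi_apply k)
  have hA'u : IsUpperSet A' := fun y w hyw hy =>
    lt_of_lt_of_le hy (Finset.sum_le_sum fun k _ => hyw k)
  set B' : Set ((Fin n → Fin n → ℝ) × (κ → ℝ)) :=
    {q | u < ∑ k : κ, (if c < 1 - q.2 k + R q.1 k then (1 : ℝ) else 0)} with hB'
  have hB'meas : MeasurableSet B' := by
    refine measurableSet_lt measurable_const (Finset.measurable_sum _ fun k _ => ?_)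
    refine Measurable.ite (measurableSet_lt measurable_const ?_) measurable_const
      measurable_const
    exact (measurable_const.sub ((measurable_pi_apply k).comp measurable_snd)).add
      ((hRm k).comp measurable_fst)
  have hsecl : ∀ z, IsLowerSet {y : κ → ℝ | (z, y) ∈ B'} := by
    intro z y w hwy hy
    have hy' : u < ∑ k : κ, (if c < 1 - y k + R z k then (1 : ℝ) else 0) := hy
    show u < ∑ k : κ, (if c < 1 - w k + R z k then (1 : ℝ) else 0)
    refine lt_of_lt_of_le hy' (Finset.sum_le_sum fun k _ => ?_)
    by_cases hyc : c < 1 - y k + R z k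
    · by_cases hwc : c < 1 - w k + R z k
      · simp [hyc, hwc]
      · exact absurd (lt_of_lt_of_le hyc (by have := hwy k; linarith)) hwc
    · simp only [if_neg hyc]
      split_ifs <;> norm_num
  -- identify the events
  have hAset : {ω | xN n t < nScore p X j ω} = Yv ⁻¹' A' := by
    ext ω
    simp only [Set.mem_setOf_eq, Set.mem_preimage, hthresh j ω]
    have hscore : score X j ω = ∑ k : κ, Yv ω k := by
      rw [score]
      exact Finset.sum_subtype _ (fun i => by simp [Finset.mem_erase]) (fun i => X j i ω)
    rw [hA', Set.mem_setOf_eq, hscore]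
  have hBset : {ω | u < ∑ i ∈ Finset.univ.erase j,
        if xN n t < nScore p X i ω then (1 : ℝ) else 0}
      = (fun ω => (Z ω, Yv ω)) ⁻¹' B' := by
    ext ω
    have hsum : ∑ i ∈ Finset.univ.erase j, (if xN n t < nScore p X i ω then (1 : ℝ) else 0)
        = ∑ k : κ, (if c < 1 - Yv ω k + R (Z ω) k then (1 : ℝ) else 0) := by
      rw [Finset.sum_subtype (p := fun i : Fin n => i ≠ j) _
        (fun i => by simp [Finset.mem_erase]) (fun i => if xN n t < nScore p X i ω then (1:ℝ) else 0)]
      refine Finset.sum_congr rfl fun k _ => ?_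
      have hjk : (j : Fin n) ≠ (k : Fin n) := fun hh => k.2 hh.symm
      have hjmem : j ∈ Finset.univ.erase (k : Fin n) :=
        Finset.mem_erase.mpr ⟨hjk, Finset.mem_univ _⟩
      have hsc : score X (k : Fin n) ω = 1 - Yv ω k + R (Z ω) k := by
        rw [score, ← Finset.add_sum_erase _ _ hjmem]
        have h1 : X (k : Fin n) j ω = 1 - X j (k : Fin n) ω := by
          have := hM.sum_one (k : Fin n) j k.2 ω
          linarith
        have h2 : ∑ l ∈ (Finset.univ.erase (k : Fin n)).erase j, X (k : Fin n) l ω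
            = R (Z ω) k := by
          rw [hR]
          refine Finset.sum_congr rfl fun l hl => ?_
          rw [Finset.mem_erase, Finset.mem_erase] at hl
          exact (hξeq ω (k : Fin n) l k.2 hl.1 (fun hh => hl.2.1 hh.symm)).symm
        rw [h1, h2]
      exact if_congr ((hthresh _ ω).trans (by rw [hsc])) rfl rfl
    rw [Set.mem_setOf_eq, Set.mem_preimage, hB', Set.mem_setOf_eq]
    dsimp only
    rw [hsum]
  -- measures
  set μY : Measure (κ → ℝ) := P.map Yv with hμY
  set μZ' : Measure (Fin n → Fin n → ℝ) := P.map Z with hμZ'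
  haveI : IsProbabilityMeasure μY := Measure.isProbabilityMeasure_map hYvm.aemeasurable
  haveI : IsProbabilityMeasure μZ' := Measure.isProbabilityMeasure_map hZm.aemeasurable
  have hpm : Measurable fun ω => (Z ω, Yv ω) := hZm.prodMk hYvm
  have hmap : P.map (fun ω => (Z ω, Yv ω)) = μZ'.prod μY :=
    (indepFun_iff_map_prod_eq_prod_map_map hZm.aemeasurable hYvm.aemeasurable).mp hindZY
  have hprodABm : MeasurableSet ((Set.univ ×ˢ A') ∩ B') :=
    (MeasurableSet.univ.prod hA'meas).inter hB'meas
  have hA_pre : Yv ⁻¹' A' = (fun ω => (Z ω, Yv ω)) ⁻¹' (Set.univ ×ˢ A') := by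
    ext ω
    simp [Set.mem_prod]
  have hPAB : P ({ω | xN n t < nScore p X j ω} ∩ {ω | u < ∑ i ∈ Finset.univ.erase j,
        if xN n t < nScore p X i ω then (1 : ℝ) else 0})
      = (μZ'.prod μY) ((Set.univ ×ˢ A') ∩ B') := by
    rw [hAset, hBset, hA_pre, ← Set.preimage_inter, ← Measure.map_apply hpm hprodABm, hmap]
  have hPA : P {ω | xN n t < nScore p X j ω} = μY A' := by
    rw [hAset, hμY, Measure.map_apply hYvm hA'meas]
  have hPB : P {ω | u < ∑ i ∈ Finset.univ.erase j,
        if xN n t < nScore p X i ω then (1 : ℝ) else 0} = (μZ'.prod μY) B' := by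
    rw [hBset, ← Measure.map_apply hpm hB'meas, hmap]
  have hsec_m : ∀ z, MeasurableSet {y : κ → ℝ | (z, y) ∈ B'} := fun z =>
    hB'meas.preimage measurable_prodMk_left
  have hHarris : ∀ z, μY (A' ∩ {y : κ → ℝ | (z, y) ∈ B'})
      ≤ μY A' * μY {y : κ → ℝ | (z, y) ∈ B'} := by
    intro z
    have h1 := harris_fintype P Y' hY'm hY'ind A' {y : κ → ℝ | (z, y) ∈ B'}
      hA'meas (hsec_m z) hA'u (hsecl z)
    rw [← hYv] at h1
    rw [hμY, Measure.map_apply hYvm (hA'meas.inter (hsec_m z)),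
      Measure.map_apply hYvm hA'meas, Measure.map_apply hYvm (hsec_m z)]
    simpa [Set.preimage_inter] using h1
  have hprod1 : (μZ'.prod μY) ((Set.univ ×ˢ A') ∩ B')
      = ∫⁻ z, μY (A' ∩ {y : κ → ℝ | (z, y) ∈ B'}) ∂μZ' := by
    rw [Measure.prod_apply hprodABm]
    congr 1
    funext z
    congr 1
    ext y
    simp only [Set.mem_preimage, Set.mem_inter_iff, Set.mem_prod, Set.mem_univ, true_and,
      Set.mem_setOf_eq]
  have hprod2 : (μZ'.prod μY) B' = ∫⁻ z, μY {y : κ → ℝ | (z, y) ∈ B'} ∂μZ' := by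
    rw [Measure.prod_apply hB'meas]
    rfl
  have hkey : P ({ω | xN n t < nScore p X j ω} ∩ {ω | u < ∑ i ∈ Finset.univ.erase j,
        if xN n t < nScore p X i ω then (1 : ℝ) else 0})
      ≤ P {ω | xN n t < nScore p X j ω} * P {ω | u < ∑ i ∈ Finset.univ.erase j,
        if xN n t < nScore p X i ω then (1 : ℝ) else 0} := by
    rw [hPAB, hPA, hPB, hprod1, hprod2]
    calc ∫⁻ z, μY (A' ∩ {y : κ → ℝ | (z, y) ∈ B'}) ∂μZ'
        ≤ ∫⁻ z, μY A' * μY {y : κ → ℝ | (z, y) ∈ B'} ∂μZ' := lintegral_mono hHarris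
      _ = μY A' * ∫⁻ z, μY {y : κ → ℝ | (z, y) ∈ B'} ∂μZ' :=
          lintegral_const_mul _ (measurable_measure_prodMk_left hB'meas)
  -- conclude via conditional probability
  have hAem : MeasurableSet {ω | xN n t < nScore p X j ω} := by
    rw [hAset]; exact hYvm hA'meas
  rcases eq_or_ne (P {ω | xN n t < nScore p X j ω}) 0 with h0 | h0
  · have hz : P ({ω | xN n t < nScore p X j ω} ∩ {ω | u < ∑ i ∈ Finset.univ.erase j,
        if xN n t < nScore p X i ω then (1 : ℝ) else 0}) = 0 :=
      le_antisymm (le_trans (measure_mono Set.inter_subset_left) h0.le) zero_le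
    rw [cond_apply hAem, hz, mul_zero]
    simp [ENNReal.toReal_nonneg]
  · have hfin : P {ω | xN n t < nScore p X j ω} ≠ ⊤ := measure_ne_top P _
    rw [cond_apply hAem, ENNReal.toReal_mul, ENNReal.toReal_inv]
    rw [inv_mul_le_iff₀ (ENNReal.toReal_pos h0 hfin)]
    have := ENNReal.toReal_mono (ENNReal.mul_ne_top hfin (measure_ne_top P _)) hkey
    rwa [ENNReal.toReal_mul] at this
end

section
/- (F1) Under Model M with p = 0 or p ∈ [1/3, 1), for every fixed t ∈ ℝ, lim_{n→∞} Σ_{i=1}^n (π_i^{(n)})² = 0, i.e., lim_{n→∞} n · (P(s_1* > x_n(t)))² = 0. -/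
open MeasureTheory ProbabilityTheory Real Filter

set_option maxHeartbeats 1000000

section AuxLemmas

lemma cosh_quad {θ : ℝ} (h : |θ| ≤ 1) : Real.cosh θ ≤ 1 + θ^2/2 + θ^4 := by
  have h1 := Real.exp_bound h (n := 4) (by norm_num)
  have h2 := Real.exp_bound (x := -θ) (by rwa [abs_neg]) (n := 4) (by norm_num)
  rw [abs_le] at h1 h2
  simp only [Finset.sum_range_succ, Finset.sum_range_zero] at h1 h2
  have habs : |θ| ^ 4 = θ ^ 4 := by
    rw [← abs_pow, abs_of_nonneg (by positivity)]
  rw [abs_neg] at h2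
  rw [habs] at h1 h2
  rw [Real.cosh_eq]
  norm_num [Nat.factorial] at h1 h2 ⊢
  nlinarith [h1.1, h1.2, h2.1, h2.2]

lemma mgf_step {Ω : Type*} [MeasurableSpace Ω] {P : Measure Ω} [IsProbabilityMeasure P]
    {Y : Ω → ℝ} (hY : Measurable Y) (hvals : ∀ ω, Y ω = 0 ∨ Y ω = 1/2 ∨ Y ω = 1)
    {p : ℝ} (hp0 : 0 ≤ p)
    (hd : P {ω | Y ω = 1/2} = ENNReal.ofReal p)
    (hw : P {ω | Y ω = 1} = ENNReal.ofReal ((1-p)/2)) (l : ℝ)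
    (hph : 0 ≤ (1-p)/2) :
    mgf (fun ω => Y ω - 1/2) P l = p + (1-p) * Real.cosh (l/2) := by
  classical
  set A : Set Ω := {ω | Y ω = 0} with hA
  set B : Set Ω := {ω | Y ω = 1/2} with hB
  set C : Set Ω := {ω | Y ω = 1} with hC
  have mA : MeasurableSet A := hY (measurableSet_singleton 0)
  have mB : MeasurableSet B := hY (measurableSet_singleton (1/2))
  have mC : MeasurableSet C := hY (measurableSet_singleton 1)
  have hmemA : ∀ ω, ω ∈ A ↔ Y ω = 0 := fun ω => Iff.rfl
  have hmemB : ∀ ω, ω ∈ B ↔ Y ω = 1/2 := fun ω => Iff.rfl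
  have hmemC : ∀ ω, ω ∈ C ↔ Y ω = 1 := fun ω => Iff.rfl
  have hAB : Disjoint A B := by
    rw [Set.disjoint_left]; intro ω hω1 hω2
    rw [hmemA] at hω1; rw [hmemB] at hω2; rw [hω1] at hω2; norm_num at hω2
  have hAC : Disjoint A C := by
    rw [Set.disjoint_left]; intro ω hω1 hω2
    rw [hmemA] at hω1; rw [hmemC] at hω2; rw [hω1] at hω2; norm_num at hω2
  have hBC : Disjoint B C := by
    rw [Set.disjoint_left]; intro ω hω1 hω2
    rw [hmemB] at hω1; rw [hmemC] at hω2; rw [hω1] at hω2; norm_num at hω2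
  have hunion : A ∪ B ∪ C = Set.univ := by
    ext ω; simp only [Set.mem_union, hmemA, hmemB, hmemC, Set.mem_univ, iff_true]
    rcases hvals ω with h | h | h
    · exact Or.inl (Or.inl h)
    · exact Or.inl (Or.inr h)
    · exact Or.inr h
  have hsum : P A + P B + P C = 1 := by
    have h1 : P (A ∪ B ∪ C) = 1 := by rw [hunion]; exact measure_univ
    rw [measure_union (Set.disjoint_union_left.mpr ⟨hAC, hBC⟩) mC, measure_union hAB mB] at h1
    exact h1
  have htrA : (P A).toReal + p + (1-p)/2 = 1 := by
    have h2 := congrArg ENNReal.toReal hsum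
    rw [ENNReal.toReal_add (by finiteness) (by finiteness),
      ENNReal.toReal_add (by finiteness) (by finiteness)] at h2
    rw [hd, hw, ENNReal.toReal_ofReal hp0, ENNReal.toReal_ofReal hph] at h2
    simpa using h2
  have hPA : (P A).toReal = (1-p)/2 := by linarith
  have hPB : (P B).toReal = p := by rw [hd, ENNReal.toReal_ofReal hp0]
  have hPC : (P C).toReal = (1-p)/2 := by rw [hw, ENNReal.toReal_ofReal hph]
  have hfeq : (fun ω => Real.exp (l * (Y ω - 1/2)))
      = A.indicator (fun _ => Real.exp (-(l/2)))
        + B.indicator (fun _ => (1:ℝ)) + C.indicator (fun _ => Real.exp (l/2)) := by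
    funext ω
    simp only [Pi.add_apply]
    rcases hvals ω with h | h | h
    · have h1 : ω ∈ A := (hmemA ω).mpr h
      have h2 : ω ∉ B := fun hx => by rw [hmemB, h] at hx; norm_num at hx
      have h3 : ω ∉ C := fun hx => by rw [hmemC, h] at hx; norm_num at hx
      rw [Set.indicator_of_mem h1, Set.indicator_of_notMem h2,
        Set.indicator_of_notMem h3, h]
      ring_nf
    · have h1 : ω ∉ A := fun hx => by rw [hmemA, h] at hx; norm_num at hx
      have h2 : ω ∈ B := (hmemB ω).mpr h
      have h3 : ω ∉ C := fun hx => by rw [hmemC, h] at hx; norm_num at hx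
      rw [Set.indicator_of_notMem h1, Set.indicator_of_mem h2,
        Set.indicator_of_notMem h3, h]
      norm_num
    · have h1 : ω ∉ A := fun hx => by rw [hmemA, h] at hx; norm_num at hx
      have h2 : ω ∉ B := fun hx => by rw [hmemB, h] at hx; norm_num at hx
      have h3 : ω ∈ C := (hmemC ω).mpr h
      rw [Set.indicator_of_notMem h1, Set.indicator_of_notMem h2,
        Set.indicator_of_mem h3, h]
      ring_nf
  have iA : Integrable (A.indicator (fun _ => Real.exp (-(l/2)))) P :=
    (integrable_const _).indicator mA
  have iB : Integrable (B.indicator (fun _ => (1:ℝ))) P := (integrable_const _).indicator mB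
  have iC : Integrable (C.indicator (fun _ => Real.exp (l/2))) P :=
    (integrable_const _).indicator mC
  rw [mgf]
  show (∫ ω, Real.exp (l * (Y ω - 1/2)) ∂P) = _
  rw [hfeq, integral_add' (iA.add iB) iC, integral_add' iA iB,
    integral_indicator_const _ mA, integral_indicator_const _ mB, integral_indicator_const _ mC]
  rw [smul_eq_mul, smul_eq_mul, smul_eq_mul, measureReal_def, measureReal_def, measureReal_def, hPA, hPB, hPC, Real.cosh_eq]
  ring

lemma xN_eq {n : ℕ} (h : 0 < Real.log n) (t : ℝ) :
    xN n t = (t / (2 * Real.log n) + 1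
        - (Real.log (Real.log n) + Real.log (4 * Real.pi)) / (2 * (2 * Real.log n)))
      * Real.sqrt (2 * Real.log n) := by
  have hL : (0:ℝ) < 2 * Real.log n := by linarith
  have key : ∀ s : ℝ, 0 < s → s^2 = 2 * Real.log n →
      (1/s) * t + (s - (1/2) * (1/s) * (Real.log (Real.log n) + Real.log (4 * Real.pi)))
      = (t / (2 * Real.log n) + 1
        - (Real.log (Real.log n) + Real.log (4 * Real.pi)) / (2 * (2 * Real.log n))) * s := by
    intro s hs0 hs2
    rw [← hs2]
    field_simp
    ring
  unfold xN aN bN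
  exact key _ (Real.sqrt_pos.mpr hL) (Real.sq_sqrt hL.le)

lemma xN_sq_ge {n : ℕ} (h : 0 < Real.log n) (t : ℝ) :
    2 * Real.log n + 2 * t - (Real.log (Real.log n) + Real.log (4 * Real.pi)) ≤ (xN n t)^2 := by
  have hL : (0:ℝ) < 2 * Real.log n := by linarith
  set C := Real.log (Real.log n) + Real.log (4 * Real.pi) with hC
  have key : ∀ s : ℝ, 0 < s → s^2 = 2 * Real.log n →
      2 * Real.log n + 2 * t - C ≤ ((1/s) * t + (s - (1/2) * (1/s) * C))^2 := by
    intro s hs0 hs2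
    rw [← hs2]
    have hrw : (1/s) * t + (s - (1/2) * (1/s) * C) = (s^2 + (t - C/2))/s := by
      field_simp; ring
    rw [hrw, div_pow, le_div_iff₀ (by positivity : (0:ℝ) < s^2)]
    nlinarith [sq_nonneg (t - C/2)]
  unfold xN aN bN
  exact key _ (Real.sqrt_pos.mpr hL) (Real.sq_sqrt hL.le)

lemma log_sub_atBot : Tendsto (fun v : ℝ => Real.log v - v) atTop atBot := by
  have hlogdiv : Tendsto (fun v : ℝ => Real.log v / v) atTop (nhds 0) :=
    Real.isLittleO_log_id_atTop.tendsto_div_nhds_zero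
  have h0 : ∀ᶠ v : ℝ in atTop, Real.log v / v < 1/2 :=
    hlogdiv.eventually_lt_const (by norm_num)
  have h1 : ∀ᶠ v : ℝ in atTop, Real.log v - v ≤ -(v/2) := by
    filter_upwards [h0, eventually_gt_atTop (0:ℝ)] with v hv hv0
    have := (div_lt_iff₀ hv0).mp hv
    linarith
  have h2 : Tendsto (fun v : ℝ => -(v/2)) atTop atBot := by
    have h3 : Tendsto (fun v : ℝ => v/2) atTop atTop :=
      tendsto_id.atTop_div_const (by norm_num)
    exact tendsto_neg_atTop_atBot.comp h3
  exact tendsto_atBot_mono' atTop h1 h2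


variable {Ω : Type*} [MeasurableSpace Ω] {P : Measure Ω} {p : ℝ}

lemma tail_bound {n : ℕ} {X : Fin (n+2) → Fin (n+2) → Ω → ℝ}
    (M : ModelM P (n+2) p X) (hp0 : 0 ≤ p) (hp1 : p < 1) {x : ℝ} (hx : 0 ≤ x)
    (hxV : x ≤ Real.sqrt (((n:ℝ)+1)*(1-p))) :
    (P {ω | x < nScore p X 0 ω}).toReal
      ≤ Real.exp (-x^2/2 + x^4/(((n:ℝ)+1)*(1-p))) := by
  classical
  haveI : IsProbabilityMeasure P := M.prob
  set V : ℝ := ((n:ℝ)+1)*(1-p) with hV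
  have hVpos : 0 < V := mul_pos (by positivity) (by linarith)
  have hsV : (0:ℝ) < Real.sqrt V := Real.sqrt_pos.mpr hVpos
  have hsV2 : Real.sqrt V ^ 2 = V := Real.sq_sqrt hVpos.le
  set l : ℝ := 2 * x / Real.sqrt V with hl
  have hl0 : 0 ≤ l := by positivity
  set g : {e : Fin (n+2) × Fin (n+2) // e.1 < e.2} → (ℝ × ℝ) → ℝ :=
    fun e => if e.val.1 = 0 then (fun q => q.1 - 1/2) else (fun _ => 0) with hg
  have hgmeas : ∀ e, Measurable (g e) := by
    intro e; rw [hg]; dsimp only; split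
    · exact measurable_fst.sub measurable_const
    · exact measurable_const
  set Z : {e : Fin (n+2) × Fin (n+2) // e.1 < e.2} → Ω → ℝ :=
    fun e => g e ∘ (fun ω => (X e.val.1 e.val.2 ω, X e.val.2 e.val.1 ω)) with hZ
  have hZindep : iIndepFun Z P := by
    exact M.indep.comp g hgmeas
  have hZmeas : ∀ e, Measurable (Z e) :=
    fun e => (hgmeas e).comp ((M.meas _ _).prodMk (M.meas _ _))
  set s : Finset {e : Fin (n+2) × Fin (n+2) // e.1 < e.2} :=
    Finset.univ.filter (fun e => e.val.1 = 0) with hs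
  have hZs : ∀ e ∈ s, ∀ ω, Z e ω = X 0 e.val.2 ω - 1/2 := by
    intro e he ω
    have h0 : e.val.1 = 0 := by simpa [hs] using he
    simp [hZ, hg, h0]
  -- sum identity
  have hsum_eq : ∀ ω, (∑ e ∈ s, Z e ω) = score X 0 ω - (((n+2:ℕ):ℝ)-1)/2 := by
    intro ω
    have hbij : ∑ e ∈ s, Z e ω
        = ∑ j ∈ Finset.univ.erase (0 : Fin (n+2)), (X 0 j ω - 1/2) := by
      refine Finset.sum_bij (fun e _ => e.val.2) ?_ ?_ ?_ ?_
      · intro e he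
        have h0 : e.val.1 = 0 := by simpa [hs] using he
        have hpos : (0 : Fin (n+2)) < e.val.2 := h0 ▸ e.property
        exact Finset.mem_erase.mpr ⟨Fin.pos_iff_ne_zero.mp hpos, Finset.mem_univ _⟩
      · intro e1 h1 e2 h2 heq
        have h01 : e1.val.1 = 0 := by simpa [hs] using h1
        have h02 : e2.val.1 = 0 := by simpa [hs] using h2
        exact Subtype.ext (Prod.ext (h01.trans h02.symm) heq)
      · intro j hj
        have hj0 : j ≠ 0 := (Finset.mem_erase.mp hj).1
        exact ⟨⟨(0, j), Fin.pos_of_ne_zero hj0⟩, by simp [hs], rfl⟩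
      · intro e he
        exact hZs e he ω
    rw [hbij, Finset.sum_sub_distrib, Finset.sum_const]
    have hcard : (Finset.univ.erase (0 : Fin (n+2))).card = n + 1 := by
      rw [Finset.card_erase_of_mem (Finset.mem_univ _), Finset.card_univ, Fintype.card_fin]
      omega
    rw [hcard, score]
    rw [nsmul_eq_mul]
    push_cast
    ring
  -- card of s
  have hcard_s : s.card = n + 1 := by
    have h1 : (Finset.univ.erase (0 : Fin (n+2))).card = n + 1 := by
      rw [Finset.card_erase_of_mem (Finset.mem_univ _), Finset.card_univ, Fintype.card_fin]
      omega
    rw [← h1]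
    refine Finset.card_bij (fun e _ => e.val.2) ?_ ?_ ?_
    · intro e he
      have h0 : e.val.1 = 0 := by simpa [hs] using he
      have hpos : (0 : Fin (n+2)) < e.val.2 := h0 ▸ e.property
      exact Finset.mem_erase.mpr ⟨Fin.pos_iff_ne_zero.mp hpos, Finset.mem_univ _⟩
    · intro e1 h1 e2 h2 heq
      have h01 : e1.val.1 = 0 := by simpa [hs] using h1
      have h02 : e2.val.1 = 0 := by simpa [hs] using h2
      exact Subtype.ext (Prod.ext (h01.trans h02.symm) heq)
    · intro j hj
      have hj0 : j ≠ 0 := (Finset.mem_erase.mp hj).1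
      exact ⟨⟨(0, j), Fin.pos_of_ne_zero hj0⟩, by simp [hs], rfl⟩
  -- integrability
  have hne_of_mem : ∀ e ∈ s, (0 : Fin (n+2)) ≠ e.val.2 := by
    intro e he
    have h0 : e.val.1 = 0 := by simpa [hs] using he
    rw [← h0]; exact ne_of_lt e.property
  have hint : ∀ e ∈ s, Integrable (fun ω => Real.exp (l * Z e ω)) P := by
    intro e he
    refine Integrable.mono' (integrable_const (Real.exp (l * 1)))
      (((hZmeas e).const_mul l).exp.aestronglyMeasurable) ?_
    filter_upwards with ω
    rw [Real.norm_eq_abs, Real.abs_exp]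
    apply Real.exp_le_exp.mpr
    rw [hZs e he ω]
    rcases M.values 0 e.val.2 (hne_of_mem e he) ω with h | h | h <;> rw [h] <;> nlinarith [hl0]
  have hSint : Integrable (fun ω => Real.exp (l * (∑ e ∈ s, Z e) ω)) P :=
    hZindep.integrable_exp_mul_sum hZmeas hint
  set ε : ℝ := x * (Real.sqrt V / 2) with hε
  have hch := measure_ge_le_exp_mul_mgf (μ := P) (X := ∑ e ∈ s, Z e) ε hl0 hSint
  -- event inclusion
  have hden : (((n+2:ℕ):ℝ) - 1) * (1 - p) / 4 = V / 2^2 := by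
    rw [hV]; push_cast; ring
  have hsqrt4 : Real.sqrt ((((n+2:ℕ):ℝ) - 1) * (1 - p) / 4) = Real.sqrt V / 2 := by
    rw [hden, Real.sqrt_div hVpos.le, Real.sqrt_sq (by norm_num : (0:ℝ) ≤ 2)]
  have hsub : {ω | x < nScore p X 0 ω} ⊆ {ω | ε ≤ (∑ e ∈ s, Z e) ω} := by
    intro ω hω
    simp only [Set.mem_setOf_eq] at hω ⊢
    unfold nScore at hω
    rw [hsqrt4] at hω
    rw [Finset.sum_apply, hsum_eq ω]
    have h2 : 0 < Real.sqrt V / 2 := by positivity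
    rw [lt_div_iff₀ h2] at hω
    rw [hε]
    linarith
  -- per-factor mgf bound
  have hfac : ∀ e ∈ s, mgf (Z e) P l ≤ Real.exp ((1-p) * (Real.cosh (l/2) - 1)) := by
    intro e he
    have hZe : Z e = fun ω => X 0 e.val.2 ω - 1/2 := funext (hZs e he)
    rw [hZe, mgf_step (M.meas 0 e.val.2) (M.values 0 e.val.2 (hne_of_mem e he)) hp0
      (M.draw 0 e.val.2 (hne_of_mem e he)) (M.win 0 e.val.2 (hne_of_mem e he)) l (by linarith)]
    have h2 : p + (1-p) * Real.cosh (l/2) = (1-p) * (Real.cosh (l/2) - 1) + 1 := by ring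
    rw [h2]
    exact Real.add_one_le_exp _
  -- product bound
  have hprod : mgf (∑ e ∈ s, Z e) P l
      ≤ Real.exp (((n:ℝ)+1) * ((1-p) * (Real.cosh (l/2) - 1))) := by
    rw [hZindep.mgf_sum hZmeas s]
    calc ∏ e ∈ s, mgf (Z e) P l
        ≤ ∏ _e ∈ s, Real.exp ((1-p) * (Real.cosh (l/2) - 1)) :=
          Finset.prod_le_prod (fun e _ => mgf_nonneg) hfac
      _ = Real.exp ((1-p) * (Real.cosh (l/2) - 1)) ^ s.card := Finset.prod_const _
      _ = Real.exp (((n:ℝ)+1) * ((1-p) * (Real.cosh (l/2) - 1))) := by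
          rw [hcard_s, ← Real.exp_nat_mul]
          push_cast
          ring_nf
  -- numeric conclusion
  have hlε : l * ε = x^2 := by
    rw [hl, hε]
    field_simp
  have hθ : l / 2 = x / Real.sqrt V := by rw [hl]; ring
  have habs : |l/2| ≤ 1 := by
    rw [hθ, abs_of_nonneg (by positivity)]
    rw [div_le_one hsV]
    exact hxV
  have hcb := cosh_quad habs
  have hsq : (l/2)^2 = x^2 / V := by rw [hθ, div_pow, hsV2]
  have h4 : (l/2)^4 = x^4 / V^2 := by
    rw [hθ, div_pow, show (Real.sqrt V)^4 = ((Real.sqrt V)^2)^2 by ring, hsV2]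
  have key : ((n:ℝ)+1) * ((1-p) * (Real.cosh (l/2) - 1)) ≤ x^2/2 + x^4/V := by
    have h5 : Real.cosh (l/2) - 1 ≤ x^2/(2*V) + x^4/V^2 := by
      rw [hsq, h4] at hcb
      have : x^2/V/2 = x^2/(2*V) := by rw [div_div, mul_comm]
      linarith [hcb, this]
    have h6 : ((n:ℝ)+1) * ((1-p) * (Real.cosh (l/2) - 1)) = V * (Real.cosh (l/2) - 1) := by
      rw [hV]; ring
    rw [h6]
    calc V * (Real.cosh (l/2) - 1) ≤ V * (x^2/(2*V) + x^4/V^2) :=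
          mul_le_mul_of_nonneg_left h5 hVpos.le
      _ = x^2/2 + x^4/V := by field_simp
  calc (P {ω | x < nScore p X 0 ω}).toReal
      ≤ (P {ω | ε ≤ (∑ e ∈ s, Z e) ω}).toReal :=
        ENNReal.toReal_mono (measure_ne_top _ _) (measure_mono hsub)
    _ ≤ Real.exp (-l * ε) * mgf (∑ e ∈ s, Z e) P l := hch
    _ ≤ Real.exp (-l * ε) * Real.exp (((n:ℝ)+1) * ((1-p) * (Real.cosh (l/2) - 1))) := by
        exact mul_le_mul_of_nonneg_left hprod (Real.exp_nonneg _)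
    _ = Real.exp (-l * ε + ((n:ℝ)+1) * ((1-p) * (Real.cosh (l/2) - 1))) := (Real.exp_add _ _).symm
    _ ≤ Real.exp (-x^2/2 + x^4/V) := by
        apply Real.exp_le_exp.mpr
        have : -l * ε = -x^2 := by rw [← hlε]; ring
        linarith [key, this]


end AuxLemmas

/-- (F1): `lim_{n→∞} ∑_{i=1}^n (π_i^{(n)})² = lim_{n→∞} n · (P(s_1* > x_n(t)))² = 0`. -/
theorem sum_sq_tail_tendsto_zero
    {Ω : Type*} [MeasurableSpace Ω] (P : MeasureTheory.Measure Ω) (p : ℝ)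
    (X : (n : ℕ) → Fin n → Fin n → Ω → ℝ)
    (hM : ∀ n, 2 ≤ n → ModelM P n p (X n))
    (hp : p = 0 ∨ (1/3 ≤ p ∧ p < 1)) (t : ℝ) :
    Tendsto (fun n : ℕ =>
        ((n : ℝ) + 2) * (P {ω | xN (n + 2) t < nScore p (X (n + 2)) 0 ω}).toReal ^ 2)
      atTop (nhds 0) := by
  have hp0 : 0 ≤ p := by
    rcases hp with h | h
    · simp [h]
    · linarith [h.1]
  have hp1 : p < 1 := by
    rcases hp with h | h
    · rw [h]; norm_num
    · exact h.2
  set q : ℝ := 1 - p with hqdef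
  have hq0 : 0 < q := by simp only [hqdef]; linarith
  set Lg : ℕ → ℝ := fun n => Real.log ((n+2:ℕ):ℝ) with hLgdef
  set r' : ℕ → ℝ := fun n => t / (2 * Lg n) + 1
      - (Real.log (Lg n) + Real.log (4 * Real.pi)) / (2 * (2 * Lg n)) with hr'def
  -- basic tendsto facts
  have hm : Tendsto (fun n : ℕ => ((n+2:ℕ):ℝ)) atTop atTop :=
    tendsto_natCast_atTop_atTop.comp (tendsto_add_atTop_nat 2)
  have hlog : Tendsto Lg atTop atTop := Real.tendsto_log_atTop.comp hm
  have hlogdiv : Tendsto (fun v : ℝ => Real.log v / v) atTop (nhds 0) :=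
    Real.isLittleO_log_id_atTop.tendsto_div_nhds_zero
  have hloglog : Tendsto (fun n => Real.log (Lg n) / Lg n) atTop (nhds 0) := hlogdiv.comp hlog
  have hr' : Tendsto r' atTop (nhds 1) := by
    have h1 : Tendsto (fun n => t / (2 * Lg n)) atTop (nhds 0) :=
      tendsto_const_nhds.div_atTop (hlog.const_mul_atTop (by norm_num : (0:ℝ) < 2))
    have h2 : Tendsto (fun n => Real.log (Lg n) / (2 * (2 * Lg n))) atTop (nhds 0) := by
      have h2a := hloglog.const_mul (1/4 : ℝ)
      rw [mul_zero] at h2a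
      refine h2a.congr fun n => ?_
      rw [show 2*(2*Lg n) = Lg n * 4 by ring, ← div_div]
      ring
    have h3 : Tendsto (fun n => Real.log (4*Real.pi) / (2 * (2 * Lg n))) atTop (nhds 0) :=
      tendsto_const_nhds.div_atTop
        ((hlog.const_mul_atTop (by norm_num : (0:ℝ) < 2)).const_mul_atTop
          (by norm_num : (0:ℝ) < 2))
    have h4 := (h1.add (tendsto_const_nhds : Tendsto (fun _ : ℕ => (1:ℝ)) atTop (nhds 1))).sub (h2.add h3)
    norm_num at h4
    refine h4.congr fun n => ?_
    simp only [hr'def]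
    rw [add_div]
    try ring
  have hquot : Tendsto (fun n : ℕ => ((n+2:ℕ):ℝ)/((n:ℝ)+1)) atTop (nhds 1) := by
    have h1 : Tendsto (fun n : ℕ => 1 + 1/((n:ℝ)+1)) atTop (nhds (1+0)) :=
      tendsto_const_nhds.add tendsto_one_div_add_atTop_nhds_zero_nat
    rw [add_zero] at h1
    refine h1.congr fun n => ?_
    have hn1 : ((n:ℝ)+1) ≠ 0 := by positivity
    push_cast
    field_simp
    ring
  have hLV1 : Tendsto (fun n : ℕ => (2 * Lg n) / (((n:ℝ)+1) * q)) atTop (nhds 0) := by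
    have h2 := (hlogdiv.comp hm).mul hquot
    have h3 := h2.const_mul (2/q)
    norm_num at h3
    refine h3.congr fun n => ?_
    have hm0 : ((n+2:ℕ):ℝ) ≠ 0 := by positivity
    have hn1 : ((n:ℝ)+1) ≠ 0 := by positivity
    simp only [hLgdef]
    push_cast
    have hm2 : ((n:ℝ)+2) ≠ 0 := by positivity
    have e1 : Real.log ((n:ℝ)+2)/((n:ℝ)+2) * (((n:ℝ)+2)/((n:ℝ)+1))
        = Real.log ((n:ℝ)+2)/((n:ℝ)+1) := by
      rw [div_mul_div_comm, mul_comm (Real.log ((n:ℝ)+2)) ((n:ℝ)+2),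
        mul_div_mul_left _ _ hm2]
    rw [e1, div_mul_div_comm, mul_comm q ((n:ℝ)+1)]
  have hLV2 : Tendsto (fun n : ℕ => (2 * Lg n)^2 / (((n:ℝ)+1) * q)) atTop (nhds 0) := by
    have h1 : Tendsto (fun v : ℝ => (Real.log v)^2 / v) atTop (nhds 0) :=
      (Real.isLittleO_pow_log_id_atTop (n := 2)).tendsto_div_nhds_zero
    have h2 := (h1.comp hm).mul hquot
    have h3 := h2.const_mul (4/q)
    norm_num at h3
    refine h3.congr fun n => ?_
    have hm0 : ((n+2:ℕ):ℝ) ≠ 0 := by positivity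
    have hn1 : ((n:ℝ)+1) ≠ 0 := by positivity
    simp only [hLgdef]
    push_cast
    have hm2 : ((n:ℝ)+2) ≠ 0 := by positivity
    have e1 : (Real.log ((n:ℝ)+2))^2/((n:ℝ)+2) * (((n:ℝ)+2)/((n:ℝ)+1))
        = (Real.log ((n:ℝ)+2))^2/((n:ℝ)+1) := by
      rw [div_mul_div_comm, mul_comm ((Real.log ((n:ℝ)+2))^2) ((n:ℝ)+2),
        mul_div_mul_left _ _ hm2]
    rw [e1, div_mul_div_comm, mul_comm q ((n:ℝ)+1)]
    ring
  have hR : Tendsto (fun n : ℕ => 2 * (r' n)^4 * ((2 * Lg n)^2 / (((n:ℝ)+1) * q)))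
      atTop (nhds 0) := by
    have h1 := ((hr'.pow 4).mul hLV2).const_mul (2:ℝ)
    norm_num at h1
    refine h1.congr fun n => ?_
    ring
  have hsq0 : Tendsto (fun n : ℕ => (r' n)^2 * ((2 * Lg n) / (((n:ℝ)+1) * q)))
      atTop (nhds 0) := by
    have h1 := (hr'.pow 2).mul hLV1
    norm_num at h1
    exact h1
  -- eventual facts
  have hev_log : ∀ᶠ n : ℕ in atTop, 0 < Lg n := hlog.eventually_gt_atTop 0
  have hev_r : ∀ᶠ n : ℕ in atTop, 1/2 < r' n :=
    hr'.eventually (eventually_gt_nhds (by norm_num))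
  have hev_sq : ∀ᶠ n : ℕ in atTop, (r' n)^2 * ((2 * Lg n) / (((n:ℝ)+1) * q)) ≤ 1 :=
    hsq0.eventually (eventually_le_nhds (by norm_num))
  have hev_R : ∀ᶠ n : ℕ in atTop,
      2 * (r' n)^4 * ((2 * Lg n)^2 / (((n:ℝ)+1) * q)) ≤ 1 :=
    hR.eventually (eventually_le_nhds (by norm_num))
  -- the dominating function
  set G : ℕ → ℝ := fun n => Real.exp ((Real.log (Lg n) - Lg n)
      + (Real.log (4*Real.pi) - 2*t + 2 * (r' n)^4 * ((2 * Lg n)^2 / (((n:ℝ)+1) * q))))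
    with hGdef
  have hG : Tendsto G atTop (nhds 0) := by
    apply Real.tendsto_exp_atBot.comp
    apply tendsto_atBot_add_right_of_ge' atTop (Real.log (4*Real.pi) - 2*t + 1)
    · exact log_sub_atBot.comp hlog
    · filter_upwards [hev_R] with n hn
      linarith
  -- squeeze
  refine tendsto_of_tendsto_of_tendsto_of_le_of_le' tendsto_const_nhds hG
    (Eventually.of_forall fun n => by positivity) ?_
  filter_upwards [hev_log, hev_r, hev_sq] with n hLn hrn hsqn
  set x : ℝ := xN (n+2) t with hxdef
  set V : ℝ := ((n:ℝ)+1) * q with hVdef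
  have hVpos : 0 < V := by positivity
  have hL2 : (0:ℝ) < 2 * Lg n := by linarith
  have hxr : x = r' n * Real.sqrt (2 * Lg n) := xN_eq hLn t
  have hx0 : 0 ≤ x := by
    rw [hxr]
    exact mul_nonneg (le_of_lt (lt_of_lt_of_le (by norm_num) hrn.le)) (Real.sqrt_nonneg _)
  have hx2sq : x^2 = (r' n)^2 * (2 * Lg n) := by
    rw [hxr, mul_pow, Real.sq_sqrt hL2.le]
  have hx2V : x^2 ≤ V := by
    have h1 : (r' n)^2 * ((2 * Lg n) / V) = ((r' n)^2 * (2 * Lg n)) / V := by ring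
    rw [h1] at hsqn
    have := (div_le_one hVpos).mp hsqn
    linarith [hx2sq]
  have hxV : x ≤ Real.sqrt V := by
    rw [show x = Real.sqrt (x^2) by rw [Real.sqrt_sq hx0]]
    exact Real.sqrt_le_sqrt hx2V
  have hbound := tail_bound (hM (n+2) (by omega)) hp0 hp1 hx0 hxV
  set pr : ℝ := (P {ω | x < nScore p (X (n+2)) 0 ω}).toReal with hprdef
  have hpr0 : (0:ℝ) ≤ pr := ENNReal.toReal_nonneg
  have hcast : Real.log ((n:ℝ)+2) = Lg n := by
    simp only [hLgdef]
    norm_num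
  have hxsqge : 2 * Lg n + 2*t - (Real.log (Lg n) + Real.log (4*Real.pi)) ≤ x^2 :=
    xN_sq_ge hLn t
  calc ((n:ℝ)+2) * pr^2
      ≤ ((n:ℝ)+2) * (Real.exp (-x^2/2 + x^4/V))^2 := by
        have h1 := pow_le_pow_left₀ hpr0 hbound 2
        exact mul_le_mul_of_nonneg_left h1 (by positivity)
    _ = Real.exp (Real.log ((n:ℝ)+2) + ((-x^2/2 + x^4/V) + (-x^2/2 + x^4/V))) := by
        simp only [Real.exp_add, Real.exp_log (show (0:ℝ) < (n:ℝ)+2 by positivity), pow_two]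
        try ring
    _ ≤ G n := by
        simp only [hGdef]
        apply Real.exp_le_exp.mpr
        rw [← hVdef, hcast]
        have hRe : 2 * (x^4/V) = 2 * (r' n)^4 * ((2 * Lg n)^2 / V) := by
          rw [show x^4 = (x^2)^2 by ring, hx2sq]
          ring
        linarith [hxsqge, hRe]
end
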